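/- Let S be a nonleaf vertex of a dissection tree of G with children S' and S'' such that below(S') and below(S'') are dissected by S. Every simple path in G[below(S)] is an (S, |S|)-path; consequently the distance between any two nodes u, v in G[below(S)] equals d_{S,|S|}(u,v). -/

import Mathlib

open SimpleGraph

variable {V : Type*}

/-- The weight of a walk: the sum of the weights of its edges. -/
def walkWeight {G : SimpleGraph V} (w : Sym2 V → ℕ) {u v : V} (p : G.Walk u v) : ℕ :=
  (p.edges.map w).sum

/-- Node sets `V₁` and `V₂` are dissected by `S` in `G` if no node of `V₁ \ S`
is adjacent to a node of `V₂ \ S`. -/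
def Dissects (G : SimpleGraph V) (S V₁ V₂ : Set V) : Prop :=
  ∀ a ∈ V₁ \ S, ∀ b ∈ V₂ \ S, ¬ G.Adj a b

/-- The distance in the subgraph of `G` induced by `A`: the minimum weight of a walk
from `u` to `v` whose support lies in `A` (`⊤` if there is none). -/
noncomputable def dIn (G : SimpleGraph V) (w : Sym2 V → ℕ) (A : Set V) (u v : V) : ℕ∞ :=
  sInf {n : ℕ∞ | ∃ p : G.Walk u v, {a | a ∈ p.support} ⊆ A ∧ n = (walkWeight w p : ℕ∞)}

/-- `SWalk G B₁ B₂ k p`: the walk `p` is an `(S,k)`-path, where `B₁ = below(S')` and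
`B₂ = below(S'')` are the two sides of `S`.  An `(S,0)`-path lies entirely in one of
the two sides; an `(S,k)`-path is an `(S,k-1)`-path followed by an `(S,0)`-path. -/
inductive SWalk (G : SimpleGraph V) (B₁ B₂ : Set V) : ℕ → ∀ {u v : V}, G.Walk u v → Prop
  | zero {u v : V} (p : G.Walk u v) :
      ({a | a ∈ p.support} ⊆ B₁ ∨ {a | a ∈ p.support} ⊆ B₂) → SWalk G B₁ B₂ 0 p
  | succ {k : ℕ} {u y v : V} (q : G.Walk u y) (r : G.Walk y v) :
      SWalk G B₁ B₂ k q → ({a | a ∈ r.support} ⊆ B₁ ∨ {a | a ∈ r.support} ⊆ B₂) →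
      SWalk G B₁ B₂ (k + 1) (q.append r)

/-- `d_{S,k}(u,v)`: the minimum weight of an `(S,k)`-path between `u` and `v`. -/
noncomputable def dSk (G : SimpleGraph V) (w : Sym2 V → ℕ) (B₁ B₂ : Set V) (k : ℕ)
    (u v : V) : ℕ∞ :=
  sInf {n : ℕ∞ | ∃ p : G.Walk u v, SWalk G B₁ B₂ k p ∧ n = (walkWeight w p : ℕ∞)}

section Aux

/-- side selector -/
def bSide (B₁ B₂ : Set V) : Bool → Set V
  | true => B₁
  | false => B₂

/-- `SWalk` refined with the side of the last piece. -/
inductive SWalk2 (G : SimpleGraph V) (B₁ B₂ : Set V) : ℕ → Bool → ∀ {u v : V}, G.Walk u v → Prop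
  | zero {u v : V} (i : Bool) (p : G.Walk u v) :
      {a | a ∈ p.support} ⊆ bSide B₁ B₂ i → SWalk2 G B₁ B₂ 0 i p
  | succ {k : ℕ} {i : Bool} {u y v : V} (j : Bool) (q : G.Walk u y) (r : G.Walk y v) :
      SWalk2 G B₁ B₂ k i q → {a | a ∈ r.support} ⊆ bSide B₁ B₂ j →
      SWalk2 G B₁ B₂ (k + 1) j (q.append r)

variable {G : SimpleGraph V} {B₁ B₂ : Set V}

lemma bSide_or {i : Bool} {s : Set V} (h : s ⊆ bSide B₁ B₂ i) : s ⊆ B₁ ∨ s ⊆ B₂ := by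
  cases i
  · exact Or.inr h
  · exact Or.inl h

lemma SWalk2.toSWalk {k : ℕ} {i : Bool} {u v : V} {p : G.Walk u v}
    (h : SWalk2 G B₁ B₂ k i p) : SWalk G B₁ B₂ k p := by
  induction h with
  | zero i p hp => exact SWalk.zero p (bSide_or hp)
  | succ j q r hq hr ih => exact SWalk.succ q r ih (bSide_or hr)

lemma SWalk2.end_mem {k : ℕ} {i : Bool} {u v : V} {p : G.Walk u v}
    (h : SWalk2 G B₁ B₂ k i p) : v ∈ bSide B₁ B₂ i := by
  induction h with
  | zero i p hp => exact hp (p.end_mem_support)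
  | succ j q r hq hr ih => exact hr (r.end_mem_support)

lemma SWalk2.succ_self {k : ℕ} {i : Bool} {u v : V} {p : G.Walk u v}
    (h : SWalk2 G B₁ B₂ k i p) : SWalk2 G B₁ B₂ (k + 1) i p := by
  have hv := h.end_mem
  have h2 : SWalk2 G B₁ B₂ (k + 1) i (p.append Walk.nil) := by
    refine SWalk2.succ i p Walk.nil h ?_
    intro a ha
    simp only [Walk.support_nil, List.mem_singleton, Set.mem_setOf_eq] at ha
    simpa [ha] using hv
  simpa [Walk.append_nil] using h2

lemma SWalk2.mono {k m : ℕ} (hkm : k ≤ m) {i : Bool} {u v : V} {p : G.Walk u v}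
    (h : SWalk2 G B₁ B₂ k i p) : SWalk2 G B₁ B₂ m i p := by
  induction hkm with
  | refl => exact h
  | step _ ih => exact ih.succ_self

lemma SWalk2.concat_same {k : ℕ} {i : Bool} {u y v : V} {q : G.Walk u y}
    (hq : SWalk2 G B₁ B₂ k i q) (h : G.Adj y v) (hv : v ∈ bSide B₁ B₂ i) :
    SWalk2 G B₁ B₂ k i (q.concat h) := by
  cases hq with
  | zero i p hp =>
    refine SWalk2.zero i _ ?_
    intro a ha
    simp only [Set.mem_setOf_eq, Walk.support_concat, List.concat_eq_append,
      List.mem_append, List.mem_singleton] at ha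
    rcases ha with ha | ha
    · exact hp ha
    · simpa [ha] using hv
  | succ j q' r hq' hr =>
    rw [Walk.concat_eq_append, ← Walk.append_assoc, ← Walk.concat_eq_append]
    refine SWalk2.succ i q' (r.concat h) hq' ?_
    intro a ha
    simp only [Set.mem_setOf_eq, Walk.support_concat, List.concat_eq_append,
      List.mem_append, List.mem_singleton] at ha
    rcases ha with ha | ha
    · exact hr ha
    · simpa [ha] using hv

lemma SWalk.support_subset {k : ℕ} {u v : V} {p : G.Walk u v}
    (h : SWalk G B₁ B₂ k p) : {a | a ∈ p.support} ⊆ B₁ ∪ B₂ := by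
  induction h with
  | zero p hp =>
    rcases hp with hp | hp
    · exact hp.trans Set.subset_union_left
    · exact hp.trans Set.subset_union_right
  | succ q r hq hr ih =>
    intro a ha
    simp only [Set.mem_setOf_eq, Walk.support_append, List.mem_append] at ha
    rcases ha with ha | ha
    · exact ih ha
    · have ha' : a ∈ r.support := List.mem_of_mem_tail ha
      rcases hr with hr | hr
      · exact Or.inl (hr ha')
      · exact Or.inr (hr ha')

lemma support_eq_concat' {u v : V} (p : G.Walk u v) : ∃ t, p.support = t ++ [v] := by
  induction p with
  | nil => exact ⟨[], rfl⟩
  | @cons a b c h p ih =>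
    obtain ⟨t, ht⟩ := ih
    exact ⟨a :: t, by simp [ht]⟩

variable {S : Set V}

noncomputable local instance : DecidablePred (· ∈ S) := Classical.decPred _

lemma countP_le_ncard (hfin : S.Finite) {l : List V} (hnd : l.Nodup) :
    l.countP (· ∈ S) ≤ S.ncard := by
  classical
  rw [List.countP_eq_length_filter]
  have hndf : (l.filter (· ∈ S)).Nodup := hnd.filter _
  have hsub : (l.filter (· ∈ S)).toFinset ⊆ hfin.toFinset := by
    intro a ha
    rw [List.mem_toFinset] at ha
    have := List.of_mem_filter ha
    simp only [decide_eq_true_eq] at this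
    simpa using this
  calc (l.filter (· ∈ S)).length = (l.filter (· ∈ S)).toFinset.card :=
        (List.toFinset_card_of_nodup hndf).symm
    _ ≤ hfin.toFinset.card := Finset.card_le_card hsub
    _ = S.ncard := (Set.ncard_eq_toFinset_card S hfin).symm

/-- The main structural lemma: the number of switches of any walk inside `B₁ ∪ B₂`
is bounded by the number of interior vertices lying in `S`. -/
lemma main_lemma (hS : S ⊆ B₁ ∩ B₂) (hdis : Dissects G S B₁ B₂) {u v : V}
    (p : G.Walk u v) (hsup : {a | a ∈ p.support} ⊆ B₁ ∪ B₂) :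
    ∃ (k : ℕ) (i : Bool), SWalk2 G B₁ B₂ k i p ∧
      k ≤ (p.support.tail.dropLast).countP (· ∈ S) := by
  induction p using Walk.concatRec with
  | Hnil =>
    rename_i z
    have hz : z ∈ B₁ ∪ B₂ := hsup (by simp)
    rcases hz with hz | hz
    · refine ⟨0, true, SWalk2.zero true _ ?_, by simp⟩
      intro a ha
      simp only [Set.mem_setOf_eq, Walk.support_nil, List.mem_singleton] at ha
      simpa [ha, bSide] using hz
    · refine ⟨0, false, SWalk2.zero false _ ?_, by simp⟩
      intro a ha
      simp only [Set.mem_setOf_eq, Walk.support_nil, List.mem_singleton] at ha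
      simpa [ha, bSide] using hz
  | Hconcat q h ih =>
    rename_i u' y' v'
    have hpsup : ∀ a ∈ (q.concat h).support, a ∈ q.support ∨ a = v' := by
      intro a ha
      rw [Walk.support_concat, List.mem_append,
        List.mem_singleton] at ha
      exact ha
    have hqsup : {a | a ∈ q.support} ⊆ B₁ ∪ B₂ := by
      intro a ha
      refine hsup ?_
      simp only [Set.mem_setOf_eq, Walk.support_concat, List.concat_eq_append,
        List.mem_append, List.mem_singleton]
      exact Or.inl ha
    obtain ⟨k, i, hsw, hk⟩ := ih hqsup
    have hy : y' ∈ B₁ ∪ B₂ := hqsup q.end_mem_support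
    have hv : v' ∈ B₁ ∪ B₂ := by
      refine hsup ?_
      simp [Walk.support_concat, List.concat_eq_append]
    obtain ⟨t, ht⟩ := support_eq_concat' q
    have hsupp_tail : (q.concat h).support.tail.dropLast = q.support.tail := by
      conv_lhs => rw [Walk.support_concat, q.support_eq_cons]
      rw [List.cons_append, List.tail_cons, List.dropLast_concat]
    by_cases hss : v' ∈ bSide B₁ B₂ i
    · refine ⟨k, i, hsw.concat_same h hss, ?_⟩
      rw [hsupp_tail]
      exact hk.trans ((q.support.tail.dropLast_sublist).countP_le)
    · -- switch
      have hyi : y' ∈ bSide B₁ B₂ i := hsw.end_mem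
      have hvj : v' ∈ bSide B₁ B₂ (!i) := by
        rcases hv with hv' | hv' <;> cases i <;>
          simp only [bSide, Bool.not_true, Bool.not_false] at hss ⊢ <;>
          first | exact hv' | exact absurd hv' hss
      have hvS : v' ∉ S := by
        intro hs
        exact hss (by cases i <;> simp only [bSide] <;> [exact (hS hs).2; exact (hS hs).1])
      have hyS : y' ∈ S := by
        by_contra hyS
        cases i with
        | false =>
          exact hdis v' ⟨hvj, hvS⟩ y' ⟨hyi, hyS⟩ h.symm
        | true =>
          exact hdis y' ⟨hyi, hyS⟩ v' ⟨hvj, hvS⟩ h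
      have hyj : y' ∈ bSide B₁ B₂ (!i) := by
        have := hS hyS
        cases i <;> simp only [bSide, Bool.not_true, Bool.not_false] <;>
          [exact this.1; exact this.2]
      have hedge : {a | a ∈ (Walk.cons h (Walk.nil : G.Walk v' v')).support} ⊆
          bSide B₁ B₂ (!i) := by
        intro a ha
        simp only [Set.mem_setOf_eq, Walk.support_cons, Walk.support_nil,
          List.mem_cons, List.mem_singleton, List.not_mem_nil, or_false] at ha
        rcases ha with ha | ha
        · rw [ha]; exact hyj
        · rw [ha]; exact hvj
      rcases t with _ | ⟨a, t'⟩
      · -- q.support = [y'] : restart with a single-edge piece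
        refine ⟨0, !i, SWalk2.zero (!i) _ ?_, Nat.zero_le _⟩
        intro a ha
        simp only [Set.mem_setOf_eq] at ha
        rcases hpsup a ha with ha' | ha'
        · rw [ht, List.nil_append, List.mem_singleton] at ha'
          rw [ha']; exact hyj
        · rw [ha']; exact hvj
      · -- q.support = a :: t' ++ [y'] with y' interior in the concat
        have hqtail : q.support.tail = t' ++ [y'] := by
          have h1 : u' :: q.support.tail = a :: (t' ++ [y']) := by
            rw [← q.support_eq_cons, ht, List.cons_append]
          exact (List.cons_eq_cons.mp h1).2
        refine ⟨k + 1, !i, ?_, ?_⟩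
        · rw [Walk.concat_eq_append]
          exact SWalk2.succ (!i) q _ hsw hedge
        · rw [hsupp_tail, hqtail, List.countP_append]
          rw [hqtail, List.dropLast_concat] at hk
          have : List.countP (· ∈ S) [y'] = 1 := by
            simp [List.countP_cons, hyS]
          omega

lemma exists_path_le (w : Sym2 V → ℕ) {u v : V} (p : G.Walk u v) :
    ∃ q : G.Walk u v, q.IsPath ∧ (∀ a, a ∈ q.support → a ∈ p.support) ∧
      walkWeight w q ≤ walkWeight w p := by
  classical
  induction p with
  | nil => exact ⟨Walk.nil, Walk.IsPath.nil, fun a ha => ha, le_refl _⟩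
  | @cons a b c h p ih =>
    obtain ⟨q, hq, hsub, hw⟩ := ih
    have hwc : walkWeight w (Walk.cons h p) = w s(a, b) + walkWeight w p := by
      simp [walkWeight, Walk.edges_cons]
    by_cases ha : a ∈ q.support
    · refine ⟨q.dropUntil a ha, hq.dropUntil ha, ?_, ?_⟩
      · intro x hx
        exact List.mem_cons_of_mem _ (hsub _ (q.support_dropUntil_subset ha hx))
      · have hsplit := q.take_spec ha
        have hedges : q.edges = (q.takeUntil a ha).edges ++ (q.dropUntil a ha).edges := by
          conv_lhs => rw [← hsplit, Walk.edges_append]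
        have hle : walkWeight w (q.dropUntil a ha) ≤ walkWeight w q := by
          simp only [walkWeight]
          rw [hedges, List.map_append, List.sum_append]
          omega
        rw [hwc]
        omega
    · refine ⟨Walk.cons h q, hq.cons ha, ?_, ?_⟩
      · intro x hx
        rw [Walk.support_cons, List.mem_cons] at hx ⊢
        rcases hx with hx | hx
        · exact Or.inl hx
        · exact Or.inr (hsub _ hx)
      · rw [hwc]
        have : walkWeight w (Walk.cons h q) = w s(a, b) + walkWeight w q := by
          simp [walkWeight, Walk.edges_cons]
        omega

end Aux

/-- Let `S` be a nonleaf vertex of a dissection tree of `G` with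
children `S'`, `S''`, where `B₁ = below(S')` and `B₂ = below(S'')` are dissected by
`S` (so `below(S) = B₁ ∪ B₂`).  Every simple path in `G[below(S)]` is an
`(S,|S|)`-path; consequently the distance between any two nodes `u, v` in
`G[below(S)]` equals `d_{S,|S|}(u,v)`. -/
theorem isPath_sWalk_card {V : Type*} (G : SimpleGraph V) (w : Sym2 V → ℕ)
    (S B₁ B₂ : Set V) (hS : S ⊆ B₁ ∩ B₂) (hdis : Dissects G S B₁ B₂)
    (hfin : S.Finite) :
    (∀ (u v : V) (p : G.Walk u v), p.IsPath → {a | a ∈ p.support} ⊆ B₁ ∪ B₂ →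
      SWalk G B₁ B₂ S.ncard p) ∧
    (∀ u v : V, dIn G w (B₁ ∪ B₂) u v = dSk G w B₁ B₂ S.ncard u v) := by
  have part1 : ∀ (u v : V) (p : G.Walk u v), p.IsPath → {a | a ∈ p.support} ⊆ B₁ ∪ B₂ →
      SWalk G B₁ B₂ S.ncard p := by
    intro u v p hp hsub
    obtain ⟨k, i, hsw, hk⟩ := main_lemma hS hdis p hsub
    have hnd : (p.support.tail.dropLast).Nodup :=
      ((p.support.tail).dropLast_sublist).nodup
        ((p.support.tail_sublist).nodup hp.support_nodup)
    have hbound := countP_le_ncard hfin hnd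
    exact (hsw.mono (hk.trans hbound)).toSWalk
  refine ⟨part1, ?_⟩
  intro u v
  refine le_antisymm ?_ ?_
  · apply sInf_le_sInf
    rintro n ⟨p, hsw, rfl⟩
    exact ⟨p, hsw.support_subset, rfl⟩
  · apply sInf_le_sInf_of_isCoinitialFor
    rintro n ⟨p, hsub, rfl⟩
    obtain ⟨q, hq, hqsub, hw⟩ := exists_path_le w p
    refine ⟨(walkWeight w q : ℕ∞), ⟨q, part1 u v q hq (fun a ha => hsub (hqsub a ha)), rfl⟩, ?_⟩
    exact_mod_cast hw
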